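/- Let P1 be a graph pattern whose translation ⟪P1⟫^{G'} correctly represents ⟦P1⟧_{D(G_j)} for each graph identifier j, and let term be an IRI. Consider the translated expression ⟪(GRAPH term P1)⟫^G = ⟪()⟫^G ⋈ Π_{var(P1)}[ Π_{G'}( ρ_{G'←gid}( σ_{term = IRI}(Graphs) ) ) ⋈ ⟪P1⟫^{G'} ]. Then: (a) if term equals the IRI u_i of a named graph G_i in the dataset, then for every graph identifier j the tuples with G = j are in one-to-one, multiplicity-preserving correspondence with the solution mappings in ⟦P1⟧_{D(G_i)}, so the result is independent of the active graph and correctly represents ⟦(GRAPH term P1)⟧_{D(G_j)} = ⟦P1⟧_{D(G_i)}; (b) if term does not equal the IRI of any graph in the dataset, the evaluation of the expression is the empty multiset, matching ⟦(GRAPH term P1)⟧_{D(G_j)} = {| |}. -/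

import Mathlib

/-!
Core formalization of SPARQL 1.1 multiset semantics and of the paper's
translation of SPARQL graph patterns into bag-semantics relational algebra
over the base relations `Graphs` and `Quads`.

Tuples of a translated expression `⟪P⟫^G` (whose attributes are the graph
attribute `G` together with the in-scope variables `var(P)`) are encoded as
pairs `(j, μ) : ℕ × SolMap`, where `j` is the value of the graph attribute and
`μ v = some t` means the attribute `v` holds the RDF term `t`, while
`μ v = none` means the attribute `v` holds the distinguished value `unb`.
-/

noncomputable section
open Classical

/-- RDF terms: IRIs, blank nodes and literals. -/
inductive RDFTerm where
  | iri : String → RDFTerm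
  | blank : String → RDFTerm
  | lit : String → RDFTerm
deriving DecidableEq

abbrev Var := String
abbrev Triple := RDFTerm × RDFTerm × RDFTerm
/-- A graph is a set of triples (no duplicates). -/
abbrev RDFGraph := Finset Triple

/-- An RDF dataset: a default graph and named graphs with pairwise distinct IRIs. -/
structure Dataset where
  dflt : RDFGraph
  named : List (String × RDFGraph)
  distinctNames : (named.map Prod.fst).Nodup

instance : Zero (Option RDFTerm) := ⟨none⟩

/-- A solution mapping: a partial function from variables to RDF terms
(finitely supported; `none` = the variable is unbound / attribute value `unb`). -/
abbrev SolMap := Var →₀ Option RDFTerm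

/-- Domain of a solution mapping. -/
def dom (μ : SolMap) : Finset Var := μ.support

/-- Two solution mappings are compatible if they agree on their common domain. -/
def compatible (μ1 μ2 : SolMap) : Prop := ∀ v ∈ dom μ1 ∩ dom μ2, μ1 v = μ2 v

/-- Union (merge) of two solution mappings; pointwise, this is the function
`first` of the paper: take the first value that is not `unb`. -/
def munion (μ1 μ2 : SolMap) : SolMap :=
  Finsupp.zipWith (fun a b => a.orElse (fun _ => b)) rfl μ1 μ2

/-- SPARQL Join of two multisets of solution mappings:
`Ω1 ⋈ Ω2 = {| μ1 ∪ μ2 : μ1 ∈ Ω1, μ2 ∈ Ω2, μ1 and μ2 compatible |}`. -/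
def mJoin (Ω1 Ω2 : Multiset SolMap) : Multiset SolMap :=
  Ω1.bind fun μ1 => (Ω2.filter fun μ2 => compatible μ1 μ2).map fun μ2 => munion μ1 μ2

/-- A component of a triple pattern: an RDF term or a variable. -/
inductive TP where
  | term : RDFTerm → TP
  | var : Var → TP
deriving DecidableEq

mutual
/-- SPARQL graph patterns.  `opt P1 P2 R` is `(P1 OPTIONAL (P2 FILTER R))`;
plain `OPTIONAL` is recovered with `R = FilterExpr.tt`. -/
inductive Pattern where
  | empty : Pattern
  | triple : TP → TP → TP → Pattern
  | and : Pattern → Pattern → Pattern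
  | union : Pattern → Pattern → Pattern
  | minus : Pattern → Pattern → Pattern
  | opt : Pattern → Pattern → FilterExpr → Pattern
  | filter : Pattern → FilterExpr → Pattern
  | graphIRI : String → Pattern → Pattern
  | graphVar : Var → Pattern → Pattern

/-- SPARQL filter expressions; `base` is an abstract boolean condition on the
current solution mapping, `ex`/`nex` are `EXISTS`/`NOT EXISTS` patterns. -/
inductive FilterExpr where
  | tt : FilterExpr
  | base : (SolMap → Prop) → FilterExpr
  | ex : Pattern → FilterExpr
  | nex : Pattern → FilterExpr
  | fand : FilterExpr → FilterExpr → FilterExpr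
  | forr : FilterExpr → FilterExpr → FilterExpr
  | fnot : FilterExpr → FilterExpr
end

def varTP : TP → Finset Var
  | .term _ => ∅
  | .var v => {v}

/-- In-scope variables `var(P)` of a graph pattern. -/
def varP : Pattern → Finset Var
  | .empty => ∅
  | .triple s p o => varTP s ∪ varTP p ∪ varTP o
  | .and P1 P2 => varP P1 ∪ varP P2
  | .union P1 P2 => varP P1 ∪ varP P2
  | .minus P1 _ => varP P1
  | .opt P1 P2 _ => varP P1 ∪ varP P2
  | .filter P1 _ => varP P1
  | .graphIRI _ P1 => varP P1
  | .graphVar v P1 => insert v (varP P1)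

/-- Substitution of a solution mapping in a triple-pattern component. -/
def substTP (μ : SolMap) : TP → TP
  | .term a => .term a
  | .var v =>
      match μ v with
      | some t => .term t
      | none => .var v

/-- Unification of a triple-pattern component with an RDF term, extending a
solution mapping (handles repeated variables). -/
def unify : TP → RDFTerm → SolMap → Option SolMap
  | .term a, b, μ => if a = b then some μ else none
  | .var v, b, μ =>
      match μ v with
      | none => some (Finsupp.update μ v (some b))
      | some c => if c = b then some μ else none

/-- Matching a triple pattern against a triple: returns the unique solution
mapping `μ` with `dom μ = var(t)` and `μ(t) = tr`, if it exists. -/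
def matchT (s p o : TP) (tr : Triple) : Option SolMap :=
  (unify s tr.1 0).bind fun μ1 => (unify p tr.2.1 μ1).bind fun μ2 => unify o tr.2.2 μ2

/-- Number of named graphs of the dataset; graph identifiers are `0, …, nGraphs D`. -/
def nGraphs (D : Dataset) : ℕ := D.named.length

/-- The graph with identifier `j` (`0` is the default graph). -/
def graphAt (D : Dataset) : ℕ → RDFGraph
  | 0 => D.dflt
  | Nat.succ k => ((D.named[k]?).map Prod.snd).getD ∅

/-- The graph identifier of the named graph with IRI `u`, if any. -/
def gidOf (D : Dataset) (u : String) : Option ℕ :=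
  (D.named.findIdx? (fun x => x.1 = u)).map (· + 1)

/-- The named graphs of the dataset, enumerated with their identifiers. -/
def namedEnum (D : Dataset) : List (ℕ × String) :=
  D.named.zipIdx.map fun p => (p.2 + 1, p.1.1)

mutual
/-- SPARQL 1.1 evaluation `⟦pre(P)⟧_{D(G_g)}` of the graph pattern `P`,
pre-instantiated by the substitution `pre` (needed for `EXISTS`),
over the dataset `D` with active graph `G_g`.  The plain evaluation
`⟦P⟧_{D(G_g)}` is `evalPat D 0 g P`. -/
def evalPat (D : Dataset) (pre : SolMap) : ℕ → Pattern → Multiset SolMap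
  | _, .empty => {0}
  | g, .triple s p o =>
      (graphAt D g).val.filterMap fun tr =>
        matchT (substTP pre s) (substTP pre p) (substTP pre o) tr
  | g, .and P1 P2 => mJoin (evalPat D pre g P1) (evalPat D pre g P2)
  | g, .union P1 P2 => evalPat D pre g P1 + evalPat D pre g P2
  | g, .minus P1 P2 =>
      (evalPat D pre g P1).filter fun μ1 =>
        ∀ μ2 ∈ evalPat D pre g P2, ¬ compatible μ1 μ2 ∨ dom μ1 ∩ dom μ2 = ∅
  | g, .opt P1 P2 R =>
      ((mJoin (evalPat D pre g P1) (evalPat D pre g P2)).filter fun μ => satF D pre g R μ)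
      + ((evalPat D pre g P1).filter fun μ1 =>
          ∀ μ2 ∈ evalPat D pre g P2,
            ¬ compatible μ1 μ2 ∨ (compatible μ1 μ2 ∧ ¬ satF D pre g R (munion μ1 μ2)))
  | g, .filter P1 R => (evalPat D pre g P1).filter fun μ => satF D pre g R μ
  | _, .graphIRI u P1 =>
      match gidOf D u with
      | some i => evalPat D pre i P1
      | none => 0
  | g, .graphVar v P1 =>
      match pre v with
      | some (RDFTerm.iri u) =>
          (match gidOf D u with
           | some i => evalPat D pre i P1
           | none => 0)
      | some _ => 0
      | none =>
          (↑(namedEnum D) : Multiset (ℕ × String)).bind fun p =>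
            mJoin (evalPat D pre p.1 P1) {Finsupp.single v (some (RDFTerm.iri p.2))}
termination_by g P => sizeOf P

/-- Satisfaction `μ ⊨_{D(G_g)} R` of a filter expression by a solution mapping,
under the pre-instantiation `pre`; `EXISTS(P)` holds iff `⟦μ(P)⟧_{D(G_g)}`
is a non-empty multiset. -/
def satF (D : Dataset) (pre : SolMap) : ℕ → FilterExpr → SolMap → Prop
  | _, .tt, _ => True
  | _, .base f, μ => f μ
  | g, .ex P, μ => evalPat D (munion pre μ) g P ≠ 0
  | g, .nex P, μ => evalPat D (munion pre μ) g P = 0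
  | g, .fand R1 R2, μ => satF D pre g R1 μ ∧ satF D pre g R2 μ
  | g, .forr R1 R2, μ => satF D pre g R1 μ ∨ satF D pre g R2 μ
  | g, .fnot R1, μ => ¬ satF D pre g R1 μ
termination_by g R μ => sizeOf R
end

/-! ### The base relations `Graphs` and `Quads` and the relational translation -/

/-- The base relation `Graphs(gid, IRI)`: the tuple `(0, <>)` for the default
graph (no IRI) and a tuple `(i, u_i)` for each named graph. -/
def graphsRel (D : Dataset) : Multiset (ℕ × Option String) :=
  ↑((0, (none : Option String)) :: (namedEnum D).map fun p => (p.1, some p.2))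

/-- The base relation `Quads(gid, sub, pred, obj)`. -/
def quadsRel (D : Dataset) : Multiset (ℕ × Triple) :=
  (graphsRel D).bind fun p => (graphAt D p.1).val.map fun tr => (p.1, tr)

/-- `⟪()⟫^G = Π_G[ρ_{G←gid}(Graphs)]`, the translation of the empty graph
pattern (tuples have the single attribute `G`, i.e. second component `0`). -/
def unitRel (D : Dataset) : Multiset (ℕ × SolMap) := (graphsRel D).map fun p => (p.1, 0)

/-- The condition `comp`: for each common variable `v`,
`v' = unb ∨ v'' = unb ∨ v' = v''`. -/
def compCond (common : Finset Var) (μ1 μ2 : SolMap) : Prop :=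
  ∀ v ∈ common, μ1 v = none ∨ μ2 v = none ∨ μ1 v = μ2 v

/-- The condition `disj`: for each common variable `v`, `v = unb ∨ v' = unb`. -/
def disjCond (common : Finset Var) (μ1 μ2 : SolMap) : Prop :=
  ∀ v ∈ common, μ1 v = none ∨ μ2 v = none

/-- The condition `subst`: for each common variable `v`, `v = v' ∨ v = unb`. -/
def substCond (common : Finset Var) (μ μ' : SolMap) : Prop :=
  ∀ v ∈ common, μ v = μ' v ∨ μ v = none

/-- The translation of `AND`: rename the common variables apart, join on the
graph attribute, select with `comp`, and project back using `first`. -/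
def transAnd (common : Finset Var) (R1 R2 : Multiset (ℕ × SolMap)) : Multiset (ℕ × SolMap) :=
  R1.bind fun t1 => R2.bind fun t2 =>
    if t1.1 = t2.1 ∧ compCond common t1.2 t2.2 then {(t1.1, munion t1.2 t2.2)} else 0

/-- Bag-semantics natural join of two relations over identical attribute sets
(tuples join exactly with equal tuples, multiplicities multiply). -/
def bagJoinSame (A B : Multiset (ℕ × SolMap)) : Multiset (ℕ × SolMap) :=
  A.bind fun t => Multiset.replicate (B.count t) t

/-- Projection of a tuple onto a set of variable attributes. -/
def restrict (μ : SolMap) (S : Finset Var) : SolMap :=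
  Finsupp.filter (fun v => v ∈ S) μ

/-- The translation of `MINUS`:
`⟪P1⟫ ⋈ [δ(⟪P1⟫) − Π_{G,var(P1)}(σ_{comp ∧ ¬disj}(⟪P1⟫ ⋈ ρ(⟪P2⟫)))]`. -/
def transMinus (common : Finset Var) (R1 R2 : Multiset (ℕ × SolMap)) : Multiset (ℕ × SolMap) :=
  let inner := R1.bind fun t1 => R2.bind fun t2 =>
    if t1.1 = t2.1 ∧ compCond common t1.2 t2.2 ∧ ¬ disjCond common t1.2 t2.2 then {t1} else 0
  bagJoinSame R1 (R1.dedup - inner)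

/-- The auxiliary expression `E_i` of the translation of `FILTER`, for an
`EXISTS`/`NOT EXISTS` subpattern with translation `Pi'`:
`Π_{G,var(P),ex_i←0}[δ(P') − Π_{G,var(P)}(σ_subst(P' ⋈ ρ(Pi')))]
 ∪ Π_{G,var(P),ex_i←1}[δ(P') − [δ(P') − Π_{G,var(P)}(σ_subst(P' ⋈ ρ(Pi')))]]`. -/
def buildE (VP Vi : Finset Var) (P' Pi' : Multiset (ℕ × SolMap)) :
    Multiset (ℕ × SolMap × ℕ) :=
  let inner := P'.bind fun t => Pi'.bind fun t' =>
    if t.1 = t'.1 ∧ substCond (VP ∩ Vi) t.2 t'.2 then {t} else 0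
  ((P'.dedup - inner).map fun t => (t.1, t.2, 0))
  + ((P'.dedup - (P'.dedup - inner)).map fun t => (t.1, t.2, 1))

/-- Evaluation of the relational condition `filter` obtained from `R`, where
the occurrences of `EXISTS(P_i)` (resp. `NOT EXISTS(P_i)`), in left-to-right
order, are replaced by `ex_i <> 0` (resp. `ex_i = 0`), the values of the
attributes `ex_i` being supplied by the list `bs`. -/
def condEval : FilterExpr → SolMap → List ℕ → Prop × List ℕ
  | .tt, _, bs => (True, bs)
  | .base f, μ, bs => (f μ, bs)
  | .ex _, _, bs => (bs.headD 0 ≠ 0, bs.tail)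
  | .nex _, _, bs => (bs.headD 0 = 0, bs.tail)
  | .fand R1 R2, μ, bs =>
      let r1 := condEval R1 μ bs
      let r2 := condEval R2 μ r1.2
      (r1.1 ∧ r2.1, r2.2)
  | .forr R1 R2, μ, bs =>
      let r1 := condEval R1 μ bs
      let r2 := condEval R2 μ r1.2
      (r1.1 ∨ r2.1, r2.2)
  | .fnot R1, μ, bs =>
      let r1 := condEval R1 μ bs
      (¬ r1.1, r1.2)

/-- Natural join of the running relation with an auxiliary relation `E_i`
(join on the graph attribute and all the variable attributes). -/
def joinE (A : Multiset (ℕ × SolMap × List ℕ)) (E : Multiset (ℕ × SolMap × ℕ)) :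
    Multiset (ℕ × SolMap × List ℕ) :=
  A.bind fun a => E.bind fun e =>
    if a.1 = e.1 ∧ a.2.1 = e.2.1 then {(a.1, a.2.1, a.2.2 ++ [e.2.2])} else 0

/-- The translation of `FILTER`:
`Π_{G,var(P)}[σ_filter(P' ⋈ E_1 ⋈ … ⋈ E_m)]`. -/
def filterApply (P' : Multiset (ℕ × SolMap)) (Es : List (Multiset (ℕ × SolMap × ℕ)))
    (R : FilterExpr) : Multiset (ℕ × SolMap) :=
  ((Es.foldl joinE (P'.map fun t => (t.1, t.2, ([] : List ℕ)))).filter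
      fun x => (condEval R x.2.1 x.2.2).1).map fun x => (x.1, x.2.1)

mutual
/-- The paper's translation `⟪P⟫^G` of a graph pattern into a bag-semantics
relational algebra expression over `Graphs` and `Quads`, evaluated;
tuples are encoded as pairs `(j, μ)` (graph attribute value, values of the
variable attributes with `none` = `unb`). -/
def transP (D : Dataset) : Pattern → Multiset (ℕ × SolMap)
  | .empty => unitRel D
  | .triple s p o =>
      (quadsRel D).filterMap fun q => (matchT s p o q.2).map fun μ => (q.1, μ)
  | .and P1 P2 => transAnd (varP P1 ∩ varP P2) (transP D P1) (transP D P2)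
  | .union P1 P2 => transP D P1 + transP D P2
  | .minus P1 P2 => transMinus (varP P1 ∩ varP P2) (transP D P1) (transP D P2)
  | .opt P1 P2 R =>
      let R1 := transP D P1
      let J := transAnd (varP P1 ∩ varP P2) R1 (transP D P2)
      let F := filterApply J (transEs D (varP P1 ∪ varP P2) J R) R
      J + bagJoinSame R1 (R1.dedup - F.map fun t => (t.1, restrict t.2 (varP P1)))
  | .filter P1 R =>
      let P' := transP D P1
      filterApply P' (transEs D (varP P1) P' R) R
  | .graphIRI u P1 =>
      let inner : Multiset SolMap :=
        (graphsRel D).bind fun p =>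
          if p.2 = some u then (transP D P1).bind (fun t => if t.1 = p.1 then {t.2} else 0)
          else 0
      (graphsRel D).bind fun p => inner.map fun μ => (p.1, μ)
  | .graphVar v P1 =>
      let inner : Multiset SolMap :=
        (graphsRel D).bind fun p =>
          match p.2 with
          | some u =>
              (transP D P1).bind fun t =>
                if t.1 = p.1 then
                  (if v ∈ varP P1 then (if t.2 v = some (RDFTerm.iri u) then {t.2} else 0)
                   else {Finsupp.update t.2 v (some (RDFTerm.iri u))})
                else 0
          | none => 0
      (graphsRel D).bind fun p => inner.map fun μ => (p.1, μ)
termination_by P => sizeOf P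

/-- The list of auxiliary expressions `E_1, …, E_m`, one for each occurrence of
`EXISTS`/`NOT EXISTS` in the filter expression, in left-to-right order. -/
def transEs (D : Dataset) (VP : Finset Var) (P' : Multiset (ℕ × SolMap)) :
    FilterExpr → List (Multiset (ℕ × SolMap × ℕ))
  | .tt => []
  | .base _ => []
  | .ex Pi => [buildE VP (varP Pi) P' (transP D Pi)]
  | .nex Pi => [buildE VP (varP Pi) P' (transP D Pi)]
  | .fand R1 R2 => transEs D VP P' R1 ++ transEs D VP P' R2
  | .forr R1 R2 => transEs D VP P' R1 ++ transEs D VP P' R2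
  | .fnot R1 => transEs D VP P' R1
termination_by R => sizeOf R
end

/-- `⟪P⟫^G` correctly represents `⟦P⟧_{D(G_j)}` for every graph identifier `j`
of the dataset: for each `j` the tuples with graph attribute `j` are in
one-to-one multiplicity-preserving correspondence with the solution mappings
(`unb`, i.e. `none`, encoding that a variable is unbound). -/
def RepOK (D : Dataset) (P : Pattern) : Prop :=
  ∀ j ≤ nGraphs D, ∀ μ : SolMap, (transP D P).count (j, μ) = (evalPat D 0 j P).count μ



section AuxLemmas
variable {α β : Type*}

private lemma aux_findIdx?_none {p : α → Bool} : ∀ (l : List α) (s : ℕ),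
    List.findIdx?.go p l s = none → ∀ x ∈ l, ¬ (p x = true) := by
  intro l
  induction l with
  | nil => simp
  | cons a l ih =>
    intro s h x hx
    rw [List.findIdx?.go] at h
    split at h
    · exact absurd h (by simp)
    · rcases List.mem_cons.mp hx with rfl | hx
      · simp_all
      · exact ih (s+1) h x hx

private lemma aux_find_lt {p : α → Bool} : ∀ (l : List α) (s k : ℕ),
    List.findIdx?.go p l s = some k → k < s + l.length := by
  intro l
  induction l with
  | nil => intro s k h; simp [List.findIdx?.go] at h
  | cons a l ih =>
    intro s k h
    rw [List.findIdx?.go] at h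
    split at h
    · cases h; simp
    · have := ih (s+1) k h; simp only [List.length_cons]; omega

private lemma aux_sum_zero (u : String) (F : ℕ → ℕ) :
    ∀ (l : List (String × β)) (s : ℕ), (∀ x ∈ l, x.1 ≠ u) →
    ((l.zipIdx s).map fun p => if p.1.1 = u then F p.2 else 0).sum = 0 := by
  intro l
  induction l with
  | nil => simp
  | cons a l ih =>
    intro s h
    rw [List.zipIdx_cons, List.map_cons, List.sum_cons,
      if_neg (h a List.mem_cons_self),
      ih (s+1) (fun x hx => h x (List.mem_cons_of_mem a hx))]

private lemma aux_sum_find (u : String) (F : ℕ → ℕ) :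
    ∀ (l : List (String × β)), (l.map Prod.fst).Nodup →
    ∀ (s k : ℕ), List.findIdx?.go (fun x => decide (x.1 = u)) l s = some k →
    ((l.zipIdx s).map fun p => if p.1.1 = u then F p.2 else 0).sum = F k := by
  intro l
  induction l with
  | nil => intro _ s k h; simp [List.findIdx?.go] at h
  | cons a l ih =>
    intro hnd s k h
    rw [List.findIdx?.go] at h
    rw [List.map_cons, List.nodup_cons] at hnd
    rw [List.zipIdx_cons, List.map_cons, List.sum_cons]
    by_cases hpa : a.1 = u
    · have hk : k = s := by simp [hpa] at h; omega
      rw [hk, if_pos hpa, aux_sum_zero u F l (s+1) ?_]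
      · simp
      · intro x hx hxu
        exact hnd.1 (List.mem_map.mpr ⟨x, hx, by rw [hxu, hpa]⟩)
    · have h' : List.findIdx?.go (fun x => decide (x.1 = u)) l (s+1) = some k := by
        simpa [hpa] using h
      rw [if_neg hpa, ih hnd.2 (s+1) k h']
      simp

private lemma aux_sum_indicator (t c : ℕ) :
    ∀ (l : List β) (s : ℕ),
    ((l.zipIdx s).map fun p => if p.2 = t then c else 0).sum
      = if s ≤ t ∧ t < s + l.length then c else 0 := by
  intro l
  induction l with
  | nil =>
    intro s
    simp only [List.zipIdx_nil, List.map_nil, List.sum_nil, List.length_nil, Nat.add_zero]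
    split_ifs <;> omega
  | cons a l ih =>
    intro s
    rw [List.zipIdx_cons, List.map_cons, List.sum_cons, ih (s+1)]
    simp only [List.length_cons]
    split_ifs <;> omega

private lemma aux_count_bind_fst (m : Multiset (ℕ × SolMap)) (i : ℕ) (μ : SolMap) :
    (m.bind fun t => if t.1 = i then ({t.2} : Multiset SolMap) else 0).count μ
      = m.count (i, μ) := by
  induction m using Multiset.induction_on with
  | empty => simp
  | cons a m ih =>
    rcases a with ⟨a1, a2⟩
    rw [Multiset.cons_bind, Multiset.count_add, ih, Multiset.count_cons]
    simp only [Prod.mk.injEq]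
    by_cases h1 : a1 = i
    · subst h1
      simp only [if_pos rfl, Multiset.count_singleton]
      by_cases h2 : μ = a2
      · simp [h2, add_comm]
      · simp [h2, fun hh : a2 = μ => h2 hh.symm]
    · have h1' : ¬ i = a1 := fun hh => h1 hh.symm
      simp [h1, h1']

private lemma aux_count_map_pair (m : Multiset SolMap) (g j : ℕ) (μ : SolMap) :
    ((m.map fun ν => (g, ν)).count (j, μ)) = if g = j then m.count μ else 0 := by
  by_cases h : g = j
  · subst h
    rw [if_pos rfl]
    exact Multiset.count_map_eq_count' _ _ (fun a b hab => by simpa using hab) _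
  · rw [if_neg h, Multiset.count_eq_zero]
    intro hm
    obtain ⟨ν, _, hν⟩ := Multiset.mem_map.mp hm
    exact h (congrArg Prod.fst hν)

private lemma aux_graphs_sum (D : Dataset) (j c : ℕ) (hj : j ≤ nGraphs D) :
    ((graphsRel D).map fun p => if p.1 = j then c else 0).sum = c := by
  unfold graphsRel namedEnum
  rw [Multiset.map_coe, Multiset.sum_coe]
  simp only [List.map_cons, List.map_map, List.sum_cons]
  have hc : ((fun p : ℕ × Option String => if p.1 = j then c else 0)
      ∘ (fun p : ℕ × String => (p.1, some p.2)) ∘ fun p : (String × RDFGraph) × ℕ => (p.2 + 1, p.1.1))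
      = fun p : (String × RDFGraph) × ℕ => if p.2 + 1 = j then c else 0 := by
    funext p; simp [Function.comp]
  rw [hc]
  cases j with
  | zero =>
    rw [if_pos rfl]
    have h0 : (fun p : (String × RDFGraph) × ℕ => if p.2 + 1 = 0 then c else 0)
        = fun _ => (0 : ℕ) := by funext p; simp
    rw [h0]
    simp
  | succ m =>
    rw [if_neg (by omega)]
    have h1 : (fun p : (String × RDFGraph) × ℕ => if p.2 + 1 = m + 1 then c else 0)
        = fun p => if p.2 = m then c else 0 := by funext p; simp
    have hm : m < D.named.length := by
      have : m + 1 ≤ D.named.length := by simpa [nGraphs] using hj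
      omega
    rw [h1, aux_sum_indicator m c D.named 0, if_pos ⟨Nat.zero_le m, by omega⟩]
    omega

end AuxLemmas

/-- Let `P1` have a correct translation for each graph
identifier and let `term` be an IRI `u`.  In
`⟪(GRAPH u P1)⟫^G = ⟪()⟫^G ⋈ Π_{var(P1)}[Π_{G'}(ρ_{G'←gid}(σ_{u = IRI}(Graphs))) ⋈ ⟪P1⟫^{G'}]`:
(a) if `u` is the IRI of the named graph with identifier `i`, then for every
graph identifier `j` the tuples with `G = j` are in one-to-one,
multiplicity-preserving correspondence with `⟦P1⟧_{D(G_i)}`, so the result is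
independent of the active graph and correctly represents
`⟦(GRAPH u P1)⟧_{D(G_j)} = ⟦P1⟧_{D(G_i)}`;
(b) if `u` names no graph of the dataset, the evaluation is the empty multiset. -/
theorem graphIRI_correct (D : Dataset) (u : String) (P1 : Pattern)
    (h1 : RepOK D P1) :
    (∀ i : ℕ, gidOf D u = some i →
      ∀ j ≤ nGraphs D, ∀ μ : SolMap,
        (transP D (.graphIRI u P1)).count (j, μ) = (evalPat D 0 i P1).count μ
        ∧ (transP D (.graphIRI u P1)).count (j, μ)
            = (evalPat D 0 j (.graphIRI u P1)).count μ)
    ∧ (gidOf D u = none → transP D (.graphIRI u P1) = 0) := by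
  have hinner_def : transP D (.graphIRI u P1) =
      (graphsRel D).bind fun p =>
        ((graphsRel D).bind fun q =>
          if q.2 = some u then (transP D P1).bind (fun t => if t.1 = q.1 then {t.2} else 0)
          else 0).map fun ν => (p.1, ν) := by rw [transP]
  set inner : Multiset SolMap := (graphsRel D).bind fun q =>
      if q.2 = some u then (transP D P1).bind (fun t => if t.1 = q.1 then {t.2} else 0)
      else 0 with hinner
  constructor
  · intro i hi j hj μ
    obtain ⟨k, hk, rfl⟩ : ∃ k, D.named.findIdx? (fun x => x.1 = u) = some k ∧ i = k + 1 := by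
      unfold gidOf at hi
      cases h : D.named.findIdx? (fun x => x.1 = u) with
      | none => rw [h] at hi; simp at hi
      | some k => rw [h] at hi; simp at hi; exact ⟨k, rfl, hi.symm⟩
    have hklt : k < D.named.length := by
      have := aux_find_lt D.named 0 k hk; omega
    have hic : inner.count μ = (transP D P1).count (k + 1, μ) := by
      rw [hinner, Multiset.count_bind]
      unfold graphsRel namedEnum
      rw [Multiset.map_coe, Multiset.sum_coe]
      simp only [List.map_cons, List.map_map, List.sum_cons]
      have hhead : Multiset.count μ (if ((0 : ℕ), (none : Option String)).2 = some u then
          (transP D P1).bind (fun t => if t.1 = ((0 : ℕ), (none : Option String)).1 then {t.2} else 0)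
          else 0) = 0 := by simp
      rw [hhead, Nat.zero_add]
      have hc : ((fun q : ℕ × Option String => Multiset.count μ
            (if q.2 = some u then (transP D P1).bind (fun t => if t.1 = q.1 then {t.2} else 0) else 0))
          ∘ (fun p : ℕ × String => (p.1, some p.2))
          ∘ fun p : (String × RDFGraph) × ℕ => (p.2 + 1, p.1.1))
          = fun p : (String × RDFGraph) × ℕ => if p.1.1 = u then
              Multiset.count μ ((transP D P1).bind (fun t => if t.1 = p.2 + 1 then {t.2} else 0))
              else 0 := by
        funext p
        simp only [Function.comp, Option.some.injEq]
        by_cases hcu : p.1.1 = u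
        · rw [if_pos hcu, if_pos hcu]
        · rw [if_neg hcu, if_neg hcu, Multiset.count_zero]
      rw [hc]
      have hs := aux_sum_find (β := RDFGraph) u (fun n => Multiset.count μ
          ((transP D P1).bind fun t => if t.1 = n + 1 then {t.2} else 0))
          D.named D.distinctNames 0 k hk
      rw [hs]
      exact aux_count_bind_fst _ _ _
    have houter : (transP D (.graphIRI u P1)).count (j, μ) = inner.count μ := by
      rw [hinner_def, Multiset.count_bind]
      have : (Multiset.map (fun p : ℕ × Option String =>
          Multiset.count (j, μ) (inner.map fun ν => (p.1, ν))) (graphsRel D))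
          = (graphsRel D).map fun p => if p.1 = j then inner.count μ else 0 := by
        apply Multiset.map_congr rfl
        intro p _
        exact aux_count_map_pair inner p.1 j μ
      rw [this, aux_graphs_sum D j (inner.count μ) hj]
    have hrep := h1 (k + 1) (by simpa [nGraphs] using hklt) μ
    have heval : evalPat D 0 j (.graphIRI u P1) = evalPat D 0 (k + 1) P1 := by
      rw [evalPat, hi]
    constructor
    · rw [houter, hic, hrep]
    · rw [heval, houter, hic, hrep]
  · intro hn
    have hn' : D.named.findIdx? (fun x => x.1 = u) = none := by
      unfold gidOf at hn
      exact Option.map_eq_none_iff.mp hn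
    have hall : ∀ x ∈ D.named, x.1 ≠ u := by
      intro x hx hxu
      exact aux_findIdx?_none D.named 0 hn' x hx (by simp [hxu])
    have hi0 : inner = 0 := by
      rw [hinner]
      rw [Multiset.bind_congr (g := fun _ => (0 : Multiset SolMap)) ?_, Multiset.bind_zero]
      intro q hq
      rw [if_neg ?_]
      intro hq2
      unfold graphsRel namedEnum at hq
      rw [Multiset.mem_coe, List.mem_cons] at hq
      rcases hq with rfl | hq
      · simp at hq2
      · rw [List.mem_map] at hq
        obtain ⟨p, hp, rfl⟩ := hq
        rw [List.mem_map] at hp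
        obtain ⟨p', hp', rfl⟩ := hp
        rcases p' with ⟨x, idx⟩
        have hxm : x ∈ D.named := by
          exact List.fst_mem_of_mem_zipIdx hp'
        simp only [Option.some.injEq] at hq2
        exact hall x hxm hq2
    rw [hinner_def, hi0]
    simp


end
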